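/- (Proposition, part (b)) Let p be a prime. The family {C_P : P ∈ 𝒫 ∖ S} is an edge clique cover of G: for every pair of distinct adjacent vertices v, v' of G, there exists a point P ∈ 𝒫 ∖ S such that v ∈ C_P and v' ∈ C_P (where C_P = {v ∈ Sym2 X : P ∈ L_v}). -/

import Mathlib

/-- Points of the concretely-defined finite projective plane of order `p`:
one point `alpha`, the points `beta y`, and the points `gamma x y`. -/
inductive ProjPoint (p : ℕ) : Type where
  | alpha : ProjPoint p
  | beta (y : ZMod p) : ProjPoint p
  | gamma (x y : ZMod p) : ProjPoint p

namespace ProjPoint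

/-- The line `L_α = {P_α} ∪ {P_β(y) : y}`. -/
def Lalpha (p : ℕ) : Set (ProjPoint p) :=
  {P | P = alpha ∨ ∃ y : ZMod p, P = beta y}

/-- The line `L_β(i) = {P_α} ∪ {P_γ(i,y) : y}`. -/
def Lbeta (p : ℕ) (i : ZMod p) : Set (ProjPoint p) :=
  {P | P = alpha ∨ ∃ y : ZMod p, P = gamma i y}

/-- The line `L_γ(i,j) = {P_β(i)} ∪ {P_γ(k, i·k + j) : k}`. -/
def Lgamma (p : ℕ) (i j : ZMod p) : Set (ProjPoint p) :=
  {P | P = beta i ∨ ∃ k : ZMod p, P = gamma k (i * k + j)}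

/-- The set of lines `ℒ`. -/
def Lines (p : ℕ) : Set (Set (ProjPoint p)) :=
  {Lalpha p} ∪ {L | ∃ i : ZMod p, L = Lbeta p i} ∪
    {L | ∃ i j : ZMod p, L = Lgamma p i j}

/-- The set `S = {P_α} ∪ {P_γ(k, k²) : k}`. -/
def S (p : ℕ) : Set (ProjPoint p) :=
  {P | P = alpha ∨ ∃ k : ZMod p, P = gamma k (k ^ 2)}

end ProjPoint

namespace ProjPoint

/-- Indexing of `S` by `X = Option (ZMod p)`: `Spt none = P_α` and
`Spt (some k) = P_γ(k, k²)`. -/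
def Spt (p : ℕ) : Option (ZMod p) → ProjPoint p
  | none => alpha
  | some k => gamma k (k ^ 2)

/-- The graph `G` on unordered pairs (diagonal allowed) from `X = Option (ZMod p)`,
where two distinct vertices are adjacent iff no element of `X` belongs to both. -/
def G (p : ℕ) : SimpleGraph (Sym2 (Option (ZMod p))) where
  Adj v w := v ≠ w ∧ ∀ x : Option (ZMod p), ¬(x ∈ v ∧ x ∈ w)
  symm := ⟨fun v w h => ⟨h.1.symm, fun x hx => h.2 x ⟨hx.2, hx.1⟩⟩⟩
  loopless := ⟨fun v h => h.1 rfl⟩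

end ProjPoint


namespace ProjPointAux

open ProjPoint

variable {p : ℕ} [Fact p.Prime]

lemma gamma_mem_S_iff (x y : ZMod p) : gamma x y ∈ S p ↔ y = x ^ 2 := by
  simp [S]

lemma beta_not_mem_S (i : ZMod p) : beta i ∉ S p := by
  simp [S]

lemma alpha_mem_S : (alpha : ProjPoint p) ∈ S p := Or.inl rfl

section Lines

variable (Lv : Sym2 (Option (ZMod p)) → Set (ProjPoint p))
  (hLine : ∀ v, Lv v ∈ ProjPoint.Lines p)
  (hoff : ∀ l l' : Option (ZMod p), l ≠ l' →
    ProjPoint.Spt p l ∈ Lv s(l, l') ∧ ProjPoint.Spt p l' ∈ Lv s(l, l'))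
  (hdiag : ∀ l : Option (ZMod p), ProjPoint.Spt p l ∈ Lv s(l, l) ∧
    ∀ t ∈ ProjPoint.S p, t ∈ Lv s(l, l) → t = ProjPoint.Spt p l)

include hLine hdiag in
lemma lineA : Lv s(none, none) = Lalpha p := by
  obtain ⟨h1, h2⟩ := hdiag none
  have h := hLine s(none, none)
  simp only [ProjPoint.Lines, Set.mem_union, Set.mem_singleton_iff,
    Set.mem_setOf_eq] at h
  rcases h with (h | ⟨i, h⟩) | ⟨i, j, h⟩
  · exact h
  · exfalso
    have hg : gamma i (i ^ 2) ∈ Lv s((none : Option (ZMod p)), none) := by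
      rw [h]; exact Or.inr ⟨i ^ 2, rfl⟩
    have := h2 (gamma i (i ^ 2)) (Or.inr ⟨i, rfl⟩) hg
    simp [Spt] at this
  · exfalso
    rw [h] at h1
    simp [Lgamma, Spt] at h1

include hLine hoff in
lemma lineB (k : ZMod p) : Lv s(none, some k) = Lbeta p k := by
  obtain ⟨h1, h2⟩ := hoff none (some k) (by simp)
  have h := hLine s(none, some k)
  simp only [ProjPoint.Lines, Set.mem_union, Set.mem_singleton_iff,
    Set.mem_setOf_eq] at h
  rcases h with (h | ⟨i, h⟩) | ⟨i, j, h⟩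
  · exfalso; rw [h] at h2; simp [Lalpha, Spt] at h2
  · rw [h] at h2
    simp only [Lbeta, Spt, Set.mem_setOf_eq] at h2
    rcases h2 with h2 | ⟨y, hy⟩
    · exact absurd h2 (by simp)
    · obtain ⟨rfl, -⟩ : k = i ∧ k ^ 2 = y := by
        simpa [ProjPoint.gamma.injEq] using hy
      exact h
  · exfalso; rw [h] at h1; simp [Lgamma, Spt] at h1

include hLine hoff hdiag in
lemma lineC (k k' : ZMod p) :
    Lv s(some k, some k') = Lgamma p (k + k') (-(k * k')) := by
  have h := hLine s(some k, some k')
  simp only [ProjPoint.Lines, Set.mem_union, Set.mem_singleton_iff,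
    Set.mem_setOf_eq] at h
  by_cases hkk : k = k'
  · subst hkk
    obtain ⟨h1, h2⟩ := hdiag (some k)
    rcases h with (h | ⟨i, h⟩) | ⟨i, j, h⟩
    · exfalso; rw [h] at h1; simp [Lalpha, Spt] at h1
    · exfalso
      have ha : (alpha : ProjPoint p) ∈ Lv s(some k, some k) := by
        rw [h]; exact Or.inl rfl
      have := h2 alpha alpha_mem_S ha
      simp [Spt] at this
    · rw [h] at h1
      simp only [Lgamma, Spt, Set.mem_setOf_eq] at h1
      rcases h1 with h1 | ⟨m, hm⟩
      · exact absurd h1 (by simp)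
      · obtain ⟨rfl, he⟩ : k = m ∧ k ^ 2 = i * m + j := by
          simpa [ProjPoint.gamma.injEq] using hm
        -- the other root i - k of x² = ix + j must coincide with k
        have hg : gamma (i - k) ((i - k) ^ 2) ∈ Lv s(some k, some k) := by
          rw [h]
          exact Or.inr ⟨i - k, by rw [show i * (i - k) + j = (i - k) ^ 2 by
            linear_combination -he]⟩
        have := h2 (gamma (i - k) ((i - k) ^ 2))
          ((gamma_mem_S_iff _ _).mpr rfl) hg
        obtain ⟨hik, -⟩ : i - k = k ∧ (i - k) ^ 2 = k ^ 2 := by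
          simpa [Spt, ProjPoint.gamma.injEq] using this
        rw [h]
        have hi : i = k + k := by linear_combination hik
        have hj : j = -(k * k) := by linear_combination -he - k * hi
        rw [hi, hj]
  · obtain ⟨h1, h2⟩ := hoff (some k) (some k') (by simpa using hkk)
    rcases h with (h | ⟨i, h⟩) | ⟨i, j, h⟩
    · exfalso; rw [h] at h1; simp [Lalpha, Spt] at h1
    · exfalso
      rw [h] at h1 h2
      simp only [Lbeta, Spt, Set.mem_setOf_eq] at h1 h2
      rcases h1 with h1 | ⟨y, hy⟩
      · exact absurd h1 (by simp)
      rcases h2 with h2 | ⟨y', hy'⟩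
      · exact absurd h2 (by simp)
      obtain ⟨hk, -⟩ : k = i ∧ k ^ 2 = y := by
        simpa [ProjPoint.gamma.injEq] using hy
      obtain ⟨hk', -⟩ : k' = i ∧ k' ^ 2 = y' := by
        simpa [ProjPoint.gamma.injEq] using hy'
      exact hkk (hk.trans hk'.symm)
    · rw [h] at h1 h2
      simp only [Lgamma, Spt, Set.mem_setOf_eq] at h1 h2
      rcases h1 with h1 | ⟨m, hm⟩
      · exact absurd h1 (by simp)
      rcases h2 with h2 | ⟨m', hm'⟩
      · exact absurd h2 (by simp)
      obtain ⟨rfl, he⟩ : k = m ∧ k ^ 2 = i * m + j := by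
        simpa [ProjPoint.gamma.injEq] using hm
      obtain ⟨rfl, he'⟩ : k' = m' ∧ k' ^ 2 = i * m' + j := by
        simpa [ProjPoint.gamma.injEq] using hm'
      have hsub : (k - k') * i = (k - k') * (k + k') := by
        linear_combination he' - he
      have hi : i = k + k' := mul_left_cancel₀ (sub_ne_zero.mpr hkk) hsub
      have hj : j = -(k * k') := by linear_combination -he - k * hi
      rw [h, hi, hj]

end Lines

/-- Intersection of `Lalpha` with any `Lgamma`, outside `S`. -/
lemma solveA (i j : ZMod p) :
    ∃ P : ProjPoint p, P ∉ S p ∧ P ∈ Lalpha p ∧ P ∈ Lgamma p i j :=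
  ⟨beta i, beta_not_mem_S i, Or.inr ⟨i, rfl⟩, Or.inl rfl⟩

/-- Intersection of `Lbeta k` with `Lgamma i j`, outside `S` provided the
intersection point is not on the conic. -/
lemma solveB (k i j : ZMod p) (h : i * k + j ≠ k ^ 2) :
    ∃ P : ProjPoint p, P ∉ S p ∧ P ∈ Lbeta p k ∧ P ∈ Lgamma p i j :=
  ⟨gamma k (i * k + j), fun hS => h ((gamma_mem_S_iff _ _).mp hS),
    Or.inr ⟨i * k + j, rfl⟩, Or.inr ⟨k, rfl⟩⟩

/-- Intersection of two `Lgamma` lines, outside `S` provided the two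
quadratics have no common root. -/
lemma solveC (i j i' j' : ZMod p)
    (h : ∀ x : ZMod p, x ^ 2 = i * x + j → x ^ 2 = i' * x + j' → False) :
    ∃ P : ProjPoint p, P ∉ S p ∧ P ∈ Lgamma p i j ∧ P ∈ Lgamma p i' j' := by
  by_cases hI : i = i'
  · exact ⟨beta i, beta_not_mem_S i, Or.inl rfl, Or.inl (by rw [hI])⟩
  · set x : ZMod p := (j' - j) * (i - i')⁻¹ with hx
    have hxe : (i - i') * x = j' - j := by
      rw [hx, mul_comm (j' - j), ← mul_assoc,
        mul_inv_cancel₀ (sub_ne_zero.mpr hI), one_mul]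
    have hmem' : i * x + j = i' * x + j' := by linear_combination hxe
    refine ⟨gamma x (i * x + j), ?_, Or.inr ⟨x, rfl⟩,
      Or.inr ⟨x, by rw [hmem']⟩⟩
    intro hS
    have h1 : x ^ 2 = i * x + j := ((gamma_mem_S_iff _ _).mp hS).symm
    have h2 : x ^ 2 = i' * x + j' := by rw [h1, hmem']
    exact h x h1 h2

end ProjPointAux

/-- (Proposition, part (b)) The family `{C_P : P ∈ 𝒫 ∖ S}` is an edge clique cover
of `G`: for every pair of adjacent vertices `v, v'` of `G`, there is a point
`P ∉ S` with `P ∈ L_v` and `P ∈ L_{v'}`. -/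
theorem edge_clique_cover_of_points_not_in_S (p : ℕ) [Fact p.Prime]
    (Lv : Sym2 (Option (ZMod p)) → Set (ProjPoint p))
    (hLine : ∀ v, Lv v ∈ ProjPoint.Lines p)
    (hoff : ∀ l l' : Option (ZMod p), l ≠ l' →
      ProjPoint.Spt p l ∈ Lv s(l, l') ∧ ProjPoint.Spt p l' ∈ Lv s(l, l'))
    (hdiag : ∀ l : Option (ZMod p), ProjPoint.Spt p l ∈ Lv s(l, l) ∧
      ∀ t ∈ ProjPoint.S p, t ∈ Lv s(l, l) → t = ProjPoint.Spt p l) :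
    ∀ v v' : Sym2 (Option (ZMod p)), (ProjPoint.G p).Adj v v' →
      ∃ P : ProjPoint p, P ∉ ProjPoint.S p ∧ P ∈ Lv v ∧ P ∈ Lv v' := by
  intro v v' hadj
  induction v, v' using Sym2.inductionOn₂ with
  | _ a b c d =>
  have hdisj := hadj.2
  have hmem : ∀ x y z : Option (ZMod p), x ∈ s(y, z) ↔ x = y ∨ x = z := by
    intro x y z; exact Sym2.mem_iff
  have hd : ∀ x : Option (ZMod p), (x = a ∨ x = b) → (x = c ∨ x = d) → False := by
    intro x h1 h2
    exact hdisj x ⟨(hmem x a b).mpr h1, (hmem x c d).mpr h2⟩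
  have hA := ProjPointAux.lineA Lv hLine hdiag
  have hB := ProjPointAux.lineB Lv hLine hoff
  have hC := ProjPointAux.lineC Lv hLine hoff hdiag
  have swap : ∀ x y : Option (ZMod p), s(x, y) = s(y, x) := fun x y => Sym2.eq_swap
  -- helper for the B vs C case
  have hBC : ∀ k m m' : ZMod p, k ≠ m → k ≠ m' →
      ∃ P : ProjPoint p, P ∉ ProjPoint.S p ∧ P ∈ ProjPoint.Lbeta p k ∧
        P ∈ ProjPoint.Lgamma p (m + m') (-(m * m')) := by
    intro k m m' h1 h2
    refine ProjPointAux.solveB k (m + m') (-(m * m')) fun he => ?_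
    have : (k - m) * (k - m') = 0 := by linear_combination -he
    rcases mul_eq_zero.mp this with h | h
    · exact h1 (by linear_combination h)
    · exact h2 (by linear_combination h)
  -- helper for the C vs C case
  have hCC : ∀ k k' m m' : ZMod p, k ≠ m → k ≠ m' → k' ≠ m → k' ≠ m' →
      ∃ P : ProjPoint p, P ∉ ProjPoint.S p ∧
        P ∈ ProjPoint.Lgamma p (k + k') (-(k * k')) ∧
        P ∈ ProjPoint.Lgamma p (m + m') (-(m * m')) := by
    intro k k' m m' h1 h2 h3 h4
    refine ProjPointAux.solveC _ _ _ _ fun x hx hx' => ?_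
    have e1 : (x - k) * (x - k') = 0 := by linear_combination hx
    have e2 : (x - m) * (x - m') = 0 := by linear_combination hx'
    rcases mul_eq_zero.mp e1 with h | h <;> rcases mul_eq_zero.mp e2 with h' | h'
    · exact h1 (by linear_combination h' - h)
    · exact h2 (by linear_combination h' - h)
    · exact h3 (by linear_combination h' - h)
    · exact h4 (by linear_combination h' - h)
  rcases a with _ | k <;> rcases b with _ | k' <;>
    rcases c with _ | m <;> rcases d with _ | m'
  -- a=none b=none c=none d=none etc: 16 cases
  · exact (hd none (Or.inl rfl) (Or.inl rfl)).elim
  · exact (hd none (Or.inl rfl) (Or.inl rfl)).elim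
  · exact (hd none (Or.inl rfl) (Or.inr rfl)).elim
  · -- v = s(none,none), v' = s(some m, some m')
    rw [hA, hC]
    exact ProjPointAux.solveA _ _
  · exact (hd none (Or.inl rfl) (Or.inl rfl)).elim
  · exact (hd none (Or.inl rfl) (Or.inl rfl)).elim
  · exact (hd none (Or.inl rfl) (Or.inr rfl)).elim
  · -- v = s(none, some k'), v' = s(some m, some m')
    rw [hB, hC]
    exact hBC k' m m' (fun h => hd (some k') (by simp [h]) (by simp [h]))
      (fun h => hd (some k') (by simp [h]) (by simp [h]))
  · exact (hd none (Or.inr rfl) (Or.inl rfl)).elim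
  · exact (hd none (Or.inr rfl) (Or.inl rfl)).elim
  · exact (hd none (Or.inr rfl) (Or.inr rfl)).elim
  · -- v = s(some k, none), v' = s(some m, some m')
    rw [swap (some k) none, hB, hC]
    exact hBC k m m' (fun h => hd (some k) (by simp [h]) (by simp [h]))
      (fun h => hd (some k) (by simp [h]) (by simp [h]))
  · -- v = s(some k, some k'), v' = s(none, none)
    rw [hC, hA]
    obtain ⟨P, h1, h2, h3⟩ := ProjPointAux.solveA (p := p) (k + k') (-(k * k'))
    exact ⟨P, h1, h3, h2⟩
  · -- v = s(some k, some k'), v' = s(none, some m')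
    rw [hC, hB]
    obtain ⟨P, h1, h2, h3⟩ := hBC m' k k'
      (fun h => hd (some m') (by simp [h]) (by simp [h]))
      (fun h => hd (some m') (by simp [h]) (by simp [h]))
    exact ⟨P, h1, h3, h2⟩
  · -- v = s(some k, some k'), v' = s(some m, none)
    rw [hC, swap (some m) none, hB]
    obtain ⟨P, h1, h2, h3⟩ := hBC m k k'
      (fun h => hd (some m) (by simp [h]) (by simp [h]))
      (fun h => hd (some m) (by simp [h]) (by simp [h]))
    exact ⟨P, h1, h3, h2⟩
  · -- both all-some
    rw [hC, hC]
    exact hCC k k' m m'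
      (fun h => hd (some k) (by simp [h]) (by simp [h]))
      (fun h => hd (some k) (by simp [h]) (by simp [h]))
      (fun h => hd (some k') (by simp [h]) (by simp [h]))
      (fun h => hd (some k') (by simp [h]) (by simp [h]))
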